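/- Let A₁, A₂, R₁, R₂, G₁, G₂ be real matrices such that the relation ℛ = ker([R₁ −R₂]) is invariant under diag(A₁,A₂) and R₁G₁G₁ᵀR₁ᵀ = R₂G₂G₂ᵀR₂ᵀ. Then for all k, h ∈ ℕ, R₁A₁ᵏG₁G₁ᵀ(A₁ʰ)ᵀR₁ᵀ = R₂A₂ᵏG₂G₂ᵀ(A₂ʰ)ᵀR₂ᵀ. -/
import Mathlib

open Matrix

/-- If `M * Mᵀ = N * Nᵀ` over `ℝ`, there is a matrix `H` with `M * H = N` and `N * Hᵀ = M`. -/
private lemma exists_link {r a b : ℕ} (M : Matrix (Fin r) (Fin a) ℝ)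
    (N : Matrix (Fin r) (Fin b) ℝ) (hMN : M * Mᵀ = N * Nᵀ) :
    ∃ H : Matrix (Fin a) (Fin b) ℝ, M * H = N ∧ N * Hᵀ = M := by
  have hcM : Mᴴ = Mᵀ := conjTranspose_eq_transpose_of_trivial M
  have hcN : Nᴴ = Nᵀ := conjTranspose_eq_transpose_of_trivial N
  have hS : (M * Mᵀ).IsHermitian := by
    rw [← hcM]; exact isHermitian_mul_conjTranspose_self M
  set S : Matrix (Fin r) (Fin r) ℝ := M * Mᵀ with hSdef
  set V : Matrix (Fin r) (Fin r) ℝ := (hS.eigenvectorUnitary : Matrix (Fin r) (Fin r) ℝ) with hV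
  set d : Fin r → ℝ := RCLike.ofReal ∘ hS.eigenvalues with hd
  have hspec : S = V * diagonal d * star V := hS.spectral_theorem
  have hVV' : star V * V = 1 := (Matrix.mem_unitaryGroup_iff').mp hS.eigenvectorUnitary.2
  have key : ∀ f g : Fin r → ℝ,
      (V * diagonal f * star V) * (V * diagonal g * star V)
        = V * diagonal (fun i => f i * g i) * star V := by
    intro f g
    rw [← diagonal_mul_diagonal]
    simp only [Matrix.mul_assoc]
    rw [show star V * (V * (diagonal g * star V)) = diagonal g * star V by
      rw [← Matrix.mul_assoc, hVV', Matrix.one_mul]]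
  set Sp : Matrix (Fin r) (Fin r) ℝ := V * diagonal (fun i => (d i)⁻¹) * star V with hSp
  set Q : Matrix (Fin r) (Fin r) ℝ := V * diagonal (fun i => d i * (d i)⁻¹) * star V with hQ
  have q1 : S * Sp = Q := by rw [hspec, hSp, key, hQ]
  have q2 : S * Q = S := by
    rw [hspec, hQ, key]
    rw [show (fun i => d i * (d i * (d i)⁻¹)) = d from by
      funext i
      rcases eq_or_ne (d i) 0 with h | h
      · simp [h]
      · field_simp]
  have hstarV : star V = Vᵀ := conjTranspose_eq_transpose_of_trivial V
  have q3 : Qᵀ = Q := by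
    rw [hQ, hstarV]
    simp [Matrix.transpose_mul, Matrix.mul_assoc]
  have q4 : Spᵀ = Sp := by
    rw [hSp, hstarV]
    simp [Matrix.transpose_mul, Matrix.mul_assoc]
  have hSsymm : Sᵀ = S := by rw [hSdef]; simp [Matrix.transpose_mul]
  have hTS : (1 - Q) * S = 0 := by
    have hST : S * (1 - Q) = 0 := by rw [Matrix.mul_sub, Matrix.mul_one, q2, sub_self]
    have := congrArg Matrix.transpose hST
    rwa [Matrix.transpose_mul, Matrix.transpose_sub, Matrix.transpose_one, q3, hSsymm,
      Matrix.transpose_zero] at this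
  have hTN : (1 - Q) * N = 0 := by
    have h0 : (1 - Q) * (N * Nᴴ) = 0 := by rw [hcN, ← hMN, hTS]
    exact (Matrix.mul_self_mul_conjTranspose_eq_zero N (1 - Q)).mp h0
  have hTM : (1 - Q) * M = 0 := by
    have h0 : (1 - Q) * (M * Mᴴ) = 0 := by rw [hcM, ← hSdef, hTS]
    exact (Matrix.mul_self_mul_conjTranspose_eq_zero M (1 - Q)).mp h0
  have hQN : Q * N = N := by
    have h1 : N - Q * N = 0 := by
      have := hTN; rwa [Matrix.sub_mul, Matrix.one_mul] at this
    have := sub_eq_zero.mp h1; exact this.symm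
  have hQM : Q * M = M := by
    have h1 : M - Q * M = 0 := by
      have := hTM; rwa [Matrix.sub_mul, Matrix.one_mul] at this
    have := sub_eq_zero.mp h1; exact this.symm
  refine ⟨Mᵀ * Sp * N, ?_, ?_⟩
  · calc M * (Mᵀ * Sp * N) = S * Sp * N := by rw [hSdef]; simp only [Matrix.mul_assoc]
      _ = Q * N := by rw [q1]
      _ = N := hQN
  · have ht : (Mᵀ * Sp * N)ᵀ = Nᵀ * Sp * M := by
      simp [Matrix.transpose_mul, q4, Matrix.mul_assoc]
    calc N * (Mᵀ * Sp * N)ᵀ = N * (Nᵀ * Sp * M) := by rw [ht]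
      _ = (N * Nᵀ) * Sp * M := by simp only [Matrix.mul_assoc]
      _ = S * Sp * M := by rw [← hMN, hSdef]
      _ = Q * M := by rw [q1]
      _ = M := hQM

theorem stmt_10 {n1 n2 r l1 l2 : ℕ} (A1 : Matrix (Fin n1) (Fin n1) ℝ)
    (A2 : Matrix (Fin n2) (Fin n2) ℝ)
    (R1 : Matrix (Fin r) (Fin n1) ℝ) (R2 : Matrix (Fin r) (Fin n2) ℝ)
    (G1 : Matrix (Fin n1) (Fin l1) ℝ) (G2 : Matrix (Fin n2) (Fin l2) ℝ)
    (hinv : ∀ (x1 : Fin n1 → ℝ) (x2 : Fin n2 → ℝ),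
      R1.mulVec x1 = R2.mulVec x2 →
      R1.mulVec (A1.mulVec x1) = R2.mulVec (A2.mulVec x2))
    (hG : R1 * G1 * G1.transpose * R1.transpose = R2 * G2 * G2.transpose * R2.transpose) :
    ∀ k h : ℕ,
      R1 * A1 ^ k * G1 * G1.transpose * (A1 ^ h).transpose * R1.transpose =
      R2 * A2 ^ k * G2 * G2.transpose * (A2 ^ h).transpose * R2.transpose := by
  -- matrix form of one invariance step
  have step : ∀ {m : ℕ} (X : Matrix (Fin n1) (Fin m) ℝ) (Y : Matrix (Fin n2) (Fin m) ℝ),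
      R1 * X = R2 * Y → R1 * (A1 * X) = R2 * (A2 * Y) := by
    intro m X Y hXY
    have hv : ∀ x : Fin m → ℝ, (R1 * (A1 * X)).mulVec x = (R2 * (A2 * Y)).mulVec x := by
      intro x
      have h0 : R1.mulVec (X.mulVec x) = R2.mulVec (Y.mulVec x) := by
        rw [Matrix.mulVec_mulVec, Matrix.mulVec_mulVec, hXY]
      have := hinv _ _ h0
      simpa [Matrix.mulVec_mulVec, Matrix.mul_assoc] using this
    ext i j
    have := congrFun (hv (Pi.single j 1)) i
    simpa using this
  -- iterated invariance
  have key : ∀ {m : ℕ} (X : Matrix (Fin n1) (Fin m) ℝ) (Y : Matrix (Fin n2) (Fin m) ℝ),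
      R1 * X = R2 * Y → ∀ k : ℕ, R1 * A1 ^ k * X = R2 * A2 ^ k * Y := by
    intro m X Y hXY k
    induction k with
    | zero => simpa [pow_zero, Matrix.mul_one] using hXY
    | succ k ih =>
      have h' : R1 * (A1 ^ k * X) = R2 * (A2 ^ k * Y) := by
        rw [← Matrix.mul_assoc, ← Matrix.mul_assoc]; exact ih
      have := step _ _ h'
      rw [pow_succ', pow_succ']
      calc R1 * (A1 * A1 ^ k) * X = R1 * (A1 * (A1 ^ k * X)) := by simp only [Matrix.mul_assoc]
        _ = R2 * (A2 * (A2 ^ k * Y)) := this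
        _ = R2 * (A2 * A2 ^ k) * Y := by simp only [Matrix.mul_assoc]
  -- linking matrix
  obtain ⟨H, hH1, hH2⟩ := exists_link (R1 * G1) (R2 * G2)
    (by simpa [Matrix.transpose_mul, Matrix.mul_assoc] using hG)
  have hB : ∀ k, (R1 * A1 ^ k * G1) * H = R2 * A2 ^ k * G2 := by
    intro k
    have h0 : R1 * (G1 * H) = R2 * G2 := by rw [← Matrix.mul_assoc]; exact hH1
    have := key _ _ h0 k
    rw [← Matrix.mul_assoc] at this
    exact this
  have hB' : ∀ k, (R2 * A2 ^ k * G2) * Hᵀ = R1 * A1 ^ k * G1 := by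
    intro k
    have h0 : R1 * G1 = R2 * (G2 * Hᵀ) := by rw [← Matrix.mul_assoc]; exact hH2.symm
    have := (key _ _ h0 k).symm
    rw [← Matrix.mul_assoc] at this
    exact this
  intro k h
  calc R1 * A1 ^ k * G1 * G1ᵀ * (A1 ^ h)ᵀ * R1ᵀ
      = (R1 * A1 ^ k * G1) * (R1 * A1 ^ h * G1)ᵀ := by
        simp [Matrix.transpose_mul, Matrix.mul_assoc]
    _ = (R1 * A1 ^ k * G1) * ((R2 * A2 ^ h * G2) * Hᵀ)ᵀ := by rw [hB']
    _ = ((R1 * A1 ^ k * G1) * H) * (R2 * A2 ^ h * G2)ᵀ := by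
        rw [Matrix.transpose_mul, Matrix.transpose_transpose, ← Matrix.mul_assoc]
    _ = (R2 * A2 ^ k * G2) * (R2 * A2 ^ h * G2)ᵀ := by rw [hB]
    _ = R2 * A2 ^ k * G2 * G2ᵀ * (A2 ^ h)ᵀ * R2ᵀ := by
        simp [Matrix.transpose_mul, Matrix.mul_assoc]
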